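/- Over {a<b<c}, let w = a b^α c b^β a b^γ c b^δ a with α, β, γ, δ ≥ 1. If α = 2k for some positive integer k < δ, then w is M-equivalent to w' = b^k a c b^β a b^{γ+α} c b^{δ-k} a. -/
import Mathlib


open List

/-- Number of occurrences of `v` as a scattered subsequence of `w`. -/
def scount {α : Type*} [DecidableEq α] (w v : List α) : ℕ := w.sublists.count v

/-- The ternary ordered alphabet {a < b < c}. -/
inductive ABC | a | b | c
deriving DecidableEq

open ABC

/-- M-equivalence over the ordered alphabet {a < b < c}. -/
def MEq3 (w w' : List ABC) : Prop :=
  scount w [a] = scount w' [a] ∧ scount w [b] = scount w' [b] ∧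
  scount w [c] = scount w' [c] ∧ scount w [a, b] = scount w' [a, b] ∧
  scount w [b, c] = scount w' [b, c] ∧ scount w [a, b, c] = scount w' [a, b, c]

/-- Projection onto {a, c}: erase all b's. -/
def projAC (w : List ABC) : List ABC := w.filter (· ≠ b)

abbrev A (k : ℕ) : List ABC := List.replicate k a
abbrev B (k : ℕ) : List ABC := List.replicate k b
abbrev C (k : ℕ) : List ABC := List.replicate k c

lemma scount_nil {α : Type*} [DecidableEq α] (v : List α) :
    scount [] v = if v = [] then 1 else 0 := by
  simp [scount, count_singleton']
  split <;> simp_all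

lemma scount_cons {α : Type*} [DecidableEq α] (x y : α) (w t : List α) :
    scount (x::w) (y::t) = scount w (y::t) + if y = x then scount w t else 0 := by
  simp only [scount, sublists_cons, bind_eq_flatMap, count_flatMap]
  induction w.sublists with
  | nil => simp
  | cons s l ih =>
    simp only [map_cons, sum_cons, count_cons, ih]
    rcases eq_or_ne y x with rfl | h
    · simp [count_cons]
      rcases eq_or_ne s t with rfl | h2
      · simp; omega
      · simp [h2]; split <;> omega
    · simp [count_cons, h, Ne.symm h]
      split <;> omega

lemma scount_empty {α : Type*} [DecidableEq α] (w : List α) : scount w [] = 1 := by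
  induction w with
  | nil => simp [scount_nil]
  | cons x w ih =>
    have h : scount (x::w) [] = scount w [] := by
      simp only [scount, sublists_cons, bind_eq_flatMap, count_flatMap]
      induction w.sublists with
      | nil => simp
      | cons s l ih2 =>
        simp only [map_cons, sum_cons, count_cons, ih2]
        rcases eq_or_ne s ([] : List α) with rfl | h2
        · simp; omega
        · simp [h2]
    rw [h, ih]

lemma scount_app1 {α : Type*} [DecidableEq α] (u v : List α) (x : α) :
    scount (u ++ v) [x] = scount u [x] + scount v [x] := by
  induction u with
  | nil => simp [scount_nil]
  | cons y u ih => simp [scount_cons, ih, scount_empty]; split <;> omega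

lemma scount_app2 {α : Type*} [DecidableEq α] (u v : List α) (x y : α) :
    scount (u ++ v) [x, y] = scount u [x, y] + scount u [x] * scount v [y] + scount v [x, y] := by
  induction u with
  | nil => simp [scount_nil]
  | cons z u ih =>
    simp only [cons_append, scount_cons, ih, scount_app1, scount_empty]
    split <;> ring

lemma scount_app3 {α : Type*} [DecidableEq α] (u v : List α) (x y z : α) :
    scount (u ++ v) [x, y, z] = scount u [x, y, z] + scount u [x, y] * scount v [z]
      + scount u [x] * scount v [y, z] + scount v [x, y, z] := by
  induction u with
  | nil => simp [scount_nil]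
  | cons w u ih =>
    simp only [cons_append, scount_cons, ih, scount_app1, scount_app2, scount_empty]
    split <;> ring

lemma scount_eq_zero {α : Type*} [DecidableEq α] {w v : List α} (h : ¬ v <+ w) :
    scount w v = 0 :=
  count_eq_zero.2 (by simpa [mem_sublists] using h)

lemma scount_B_b (n : ℕ) : scount (B n) [b] = n := by
  induction n with
  | zero => simp [scount_nil]
  | succ n ih => simp [replicate_succ, scount_cons, ih, scount_empty]

lemma scount_B_a (n : ℕ) : scount (B n) [a] = 0 := by
  apply scount_eq_zero; intro hs
  rcases sublist_replicate_iff.1 hs with ⟨m, _, hv⟩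
  rcases m with _ | m <;> simp [replicate_succ] at hv

lemma scount_B_c (n : ℕ) : scount (B n) [c] = 0 := by
  apply scount_eq_zero; intro hs
  rcases sublist_replicate_iff.1 hs with ⟨m, _, hv⟩
  rcases m with _ | m <;> simp [replicate_succ] at hv

lemma scount_B_ab (n : ℕ) : scount (B n) [a, b] = 0 := by
  apply scount_eq_zero; intro hs
  rcases sublist_replicate_iff.1 hs with ⟨m, _, hv⟩
  rcases m with _ | m <;> simp [replicate_succ] at hv

lemma scount_B_bc (n : ℕ) : scount (B n) [b, c] = 0 := by
  apply scount_eq_zero; intro hs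
  rcases sublist_replicate_iff.1 hs with ⟨m, _, hv⟩
  rcases m with _ | _ | m <;> simp [replicate_succ] at hv

lemma scount_B_abc (n : ℕ) : scount (B n) [a, b, c] = 0 := by
  apply scount_eq_zero; intro hs
  rcases sublist_replicate_iff.1 hs with ⟨m, _, hv⟩
  rcases m with _ | m <;> simp [replicate_succ] at hv

theorem stmt_8 (α β γ δ k : ℕ)
    (hα : 1 ≤ α) (hβ : 1 ≤ β) (hγ : 1 ≤ γ) (hδ : 1 ≤ δ)
    (hk : 1 ≤ k) (hkδ : k < δ) (hα2k : α = 2 * k) :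
    MEq3 ([a] ++ B α ++ [c] ++ B β ++ [a] ++ B γ ++ [c] ++ B δ ++ [a])
      (B k ++ [a] ++ [c] ++ B β ++ [a] ++ B (γ + α) ++ [c] ++ B (δ - k) ++ [a]) := by
  obtain ⟨m, rfl⟩ : ∃ m, δ = k + m := ⟨δ - k, by omega⟩
  subst hα2k
  have hdk : k + m - k = m := by omega
  refine ⟨?_, ?_, ?_, ?_, ?_, ?_⟩ <;>
  · simp only [hdk, scount_app3, scount_app2, scount_app1, scount_B_b, scount_B_a, scount_B_c,
      scount_B_ab, scount_B_bc, scount_B_abc]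
    simp (config := { decide := true }) only [scount_cons, scount_nil, scount_empty,
      reduceIte, Nat.mul_zero, Nat.zero_mul, Nat.mul_one, Nat.one_mul, Nat.add_zero, Nat.zero_add]
    try ring
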